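/- arXiv:0808.0640 — 4 statements merged into one kernel-verified Lean document; each statement's English description precedes it below -/
import Mathlib

section
/- The Riesz function satisfies R(x) = Σ_{n=1}^∞ μ(n)·(x/n²)·e^{−x/n²} for all real x, where R(x) = Σ_{k=0}^∞ (−1)^k x^{k+1}/(k! ζ(2k+2)) and μ is the Möbius function. -/
open scoped Real

/-- ζ(2j+2) as a real number (the zeta values at positive even integers are real). -/
noncomputable def zetaE (j : ℕ) : ℝ := (riemannZeta (2 * j + 2)).re

lemma zeta_tsum_aux (k : ℕ) :
    riemannZeta (2 * (k : ℂ) + 2)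
      = ((∑' n : ℕ, 1 / (n:ℝ) ^ (2 * k + 2) : ℝ) : ℂ) := by
  have hk : (1:ℕ) < 2 * k + 2 := by omega
  have h0 : (2 * (k:ℂ) + 2) = ((2 * k + 2 : ℕ) : ℂ) := by push_cast; ring
  rw [h0, zeta_nat_eq_tsum_of_gt_one hk, Complex.ofReal_tsum]
  push_cast
  rfl

lemma zetaE_eq_tsum (k : ℕ) : zetaE k = ∑' n : ℕ, 1 / (n:ℝ) ^ (2 * k + 2) := by
  rw [zetaE, zeta_tsum_aux, Complex.ofReal_re]

lemma zeta_even_eq (k : ℕ) :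
    riemannZeta (2 * (k : ℂ) + 2) = ((zetaE k : ℝ) : ℂ) := by
  rw [zeta_tsum_aux, zetaE_eq_tsum]

lemma summable_one_div_pow (k : ℕ) :
    Summable (fun n : ℕ => 1 / (n:ℝ) ^ (2 * k + 2)) :=
  Real.summable_one_div_nat_pow.mpr (by omega)

lemma one_le_zetaE (k : ℕ) : 1 ≤ zetaE k := by
  rw [zetaE_eq_tsum]
  have := Summable.le_tsum (summable_one_div_pow k) 1 (fun j _ => by positivity)
  simpa using this

lemma zetaE_pos (k : ℕ) : 0 < zetaE k := lt_of_lt_of_le one_pos (one_le_zetaE k)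

open ArithmeticFunction in
lemma moebius_tsum (k : ℕ) :
    ∑' n : ℕ+, (moebius n : ℝ) / (n : ℝ) ^ (2 * k + 2) = (zetaE k)⁻¹ := by
  set s : ℂ := ((2 * k + 2 : ℕ) : ℂ) with hs
  have hs1 : 1 < s.re := by
    rw [hs, Complex.natCast_re]
    exact_mod_cast (by omega : 1 < 2 * k + 2)
  have hL : LSeries (fun n : ℕ => ((moebius n : ℤ) : ℂ)) s = (riemannZeta s)⁻¹ := by
    have h1 := LSeries_zeta_mul_Lseries_moebius hs1
    rw [LSeries_zeta_eq_riemannZeta hs1] at h1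
    exact eq_inv_of_mul_eq_one_left (by rw [mul_comm]; exact h1)
  have hterm : ∀ n : ℕ+,
      LSeries.term (fun n : ℕ => ((moebius n : ℤ) : ℂ)) s (n : ℕ)
        = (((moebius (n : ℕ) : ℝ) / ((n : ℕ) : ℝ) ^ (2 * k + 2) : ℝ) : ℂ) := by
    intro n
    rw [LSeries.term_of_ne_zero n.ne_zero, hs, Complex.cpow_natCast]
    push_cast
    rfl
  have hsupp : Function.support (LSeries.term (fun n : ℕ => ((moebius n : ℤ) : ℂ)) s)
      ⊆ Set.range (fun n : ℕ+ => (n : ℕ)) := by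
    intro n hn
    rcases Nat.eq_zero_or_pos n with h | h
    · exact absurd (h ▸ LSeries.term_zero _ _) hn
    · exact ⟨⟨n, h⟩, rfl⟩
  have hcoe : ∑' n : ℕ+, LSeries.term (fun n : ℕ => ((moebius n : ℤ) : ℂ)) s (n : ℕ)
      = LSeries (fun n : ℕ => ((moebius n : ℤ) : ℂ)) s :=
    Function.Injective.tsum_eq (fun a b h => PNat.coe_injective h) hsupp
  have key : (((∑' n : ℕ+, (moebius n : ℝ) / (n : ℝ) ^ (2 * k + 2) : ℝ)) : ℂ)
      = (((zetaE k)⁻¹ : ℝ) : ℂ) := by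
    rw [Complex.ofReal_tsum]
    calc ∑' n : ℕ+, (((moebius n : ℝ) / (n : ℝ) ^ (2 * k + 2) : ℝ) : ℂ)
        = ∑' n : ℕ+, LSeries.term (fun n : ℕ => ((moebius n : ℤ) : ℂ)) s (n : ℕ) := by
          exact tsum_congr fun n => (hterm n).symm
      _ = (riemannZeta s)⁻¹ := by rw [hcoe, hL]
      _ = (((zetaE k)⁻¹ : ℝ) : ℂ) := by
          have h0 : s = 2 * (k : ℂ) + 2 := by rw [hs]; push_cast; ring
          rw [h0, zeta_even_eq, Complex.ofReal_inv]
  exact_mod_cast key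

/-- Báez-Duarte coefficients. -/
noncomputable def bdc (k : ℕ) : ℝ :=
  ∑ j ∈ Finset.range (k + 1), (-1 : ℝ) ^ j * (k.choose j) / zetaE j

/-- The Riesz function. -/
noncomputable def rieszR (x : ℝ) : ℝ :=
  ∑' k : ℕ, (-1 : ℝ) ^ k * x ^ (k + 1) / ((k.factorial : ℝ) * zetaE k)

lemma summable_one_div_sq_pnat : Summable (fun n : ℕ+ => 1 / ((n : ℕ) : ℝ) ^ 2) :=
  (Real.summable_one_div_nat_pow.mpr one_lt_two).comp_injective PNat.coe_injective

open ArithmeticFunction in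
lemma moebius_div_bound (k : ℕ) (n : ℕ+) :
    ‖(moebius (n : ℕ) : ℝ) / ((n : ℕ) : ℝ) ^ (2 * k + 2)‖ ≤ 1 / ((n : ℕ) : ℝ) ^ 2 := by
  have h1 : (1 : ℝ) ≤ ((n : ℕ) : ℝ) := by exact_mod_cast n.one_le
  have habs : |(moebius (n : ℕ) : ℝ)| ≤ 1 := by
    have := abs_moebius_le_one (n := (n : ℕ))
    exact_mod_cast (by exact_mod_cast this : |((moebius (n : ℕ) : ℤ) : ℝ)| ≤ 1)
  rw [Real.norm_eq_abs, abs_div, abs_of_nonneg (by positivity : (0:ℝ) ≤ ((n:ℕ):ℝ) ^ (2*k+2))]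
  exact div_le_div₀ zero_le_one habs (by positivity)
    (pow_le_pow_right₀ h1 (by omega))

open ArithmeticFunction in
lemma summable_moebius_pnat (k : ℕ) :
    Summable (fun n : ℕ+ => (moebius (n : ℕ) : ℝ) / ((n : ℕ) : ℝ) ^ (2 * k + 2)) :=
  Summable.of_norm_bounded summable_one_div_sq_pnat (moebius_div_bound k)

open ArithmeticFunction in
theorem riesz_moebius_repr (x : ℝ) :
    rieszR x = ∑' n : ℕ+, (moebius n : ℝ) * (x / (n : ℝ) ^ 2) * Real.exp (-x / (n : ℝ) ^ 2) := by
  set g : ℕ → ℕ+ → ℝ := fun k n =>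
    ((-1:ℝ) ^ k * x ^ (k+1) / (k.factorial : ℝ)) * ((moebius (n:ℕ) : ℝ) / ((n:ℕ) : ℝ) ^ (2*k+2))
    with hg
  have ha : Summable (fun k : ℕ => |x| ^ (k+1) / (k.factorial : ℝ)) := by
    have := (Real.summable_pow_div_factorial |x|).mul_left |x|
    refine this.congr fun k => ?_
    rw [pow_succ, mul_div_assoc]
    ring
  have hsum : Summable (Function.uncurry g) := by
    have hb := summable_one_div_sq_pnat
    have hprod := ha.mul_of_nonneg hb (fun k => by positivity) (fun n => by positivity)
    refine Summable.of_norm_bounded hprod ?_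
    rintro ⟨k, n⟩
    simp only [Function.uncurry, hg]
    rw [norm_mul]
    have h1 : ‖(-1:ℝ) ^ k * x ^ (k+1) / (k.factorial : ℝ)‖ = |x| ^ (k+1) / (k.factorial : ℝ) := by
      rw [Real.norm_eq_abs, abs_div, abs_mul, abs_pow, abs_pow, abs_neg, abs_one, one_pow,
        one_mul, abs_of_nonneg (by positivity : (0:ℝ) ≤ (k.factorial : ℝ))]
    rw [h1]
    exact mul_le_mul_of_nonneg_left (moebius_div_bound k n) (by positivity)
  have h1 : rieszR x = ∑' k, ∑' n, g k n := by
    rw [rieszR]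
    refine tsum_congr fun k => ?_
    rw [hg]
    rw [tsum_mul_left, moebius_tsum k, ← div_div, div_eq_mul_inv]
  have h2 : ∀ n : ℕ+, ∑' k, g k n
      = (moebius (n:ℕ) : ℝ) * (x / ((n:ℕ):ℝ) ^ 2) * Real.exp (-x / ((n:ℕ):ℝ) ^ 2) := by
    intro n
    have hn : ((n:ℕ):ℝ) ≠ 0 := by positivity
    have hterm : ∀ k : ℕ, g k n
        = ((moebius (n:ℕ) : ℝ) * (x / ((n:ℕ):ℝ) ^ 2))
          * ((-x / ((n:ℕ):ℝ) ^ 2) ^ k / (k.factorial : ℝ)) := by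
      intro k
      have hfac : ((k.factorial : ℝ)) ≠ 0 := by positivity
      have hpow : ((n:ℕ):ℝ) ^ (2*k+2) = ((n:ℕ):ℝ) ^ 2 * (((n:ℕ):ℝ) ^ 2) ^ k := by
        rw [← pow_mul, ← pow_add]
        ring_nf
      rw [hg]
      simp only []
      rw [hpow]
      field_simp
      ring_nf
      simp [hn]
    rw [tsum_congr hterm, tsum_mul_left, Real.exp_eq_exp_ℝ, NormedSpace.exp_eq_tsum_div]
  rw [h1, ← Summable.tsum_comm hsum]
  exact tsum_congr fun n => h2 n
end

section
/- The Báez-Duarte coefficients tend to zero: c_k = Σ_{j=0}^k (−1)^j C(k,j)/ζ(2j+2) → 0 as k → ∞. -/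
open scoped Real

open ArithmeticFunction in
lemma zetaE_inv_hasSum (j : ℕ) :
    HasSum (fun n : ℕ => (moebius n : ℝ) / (n : ℝ) ^ (2 * j + 2)) (zetaE j)⁻¹ := by
  set s : ℂ := 2 * (j : ℂ) + 2 with hs_def
  have hsn : s = ((2 * j + 2 : ℕ) : ℂ) := by push_cast; ring
  have hs : 1 < s.re := by
    rw [hsn]
    simp only [Complex.natCast_re]
    exact_mod_cast by omega
  -- ζ s is real
  have hzeta : riemannZeta s = ((zetaE j : ℝ) : ℂ) := by
    have h1 : riemannZeta s = ((∑' n : ℕ, 1 / (n : ℝ) ^ (2 * j + 2) : ℝ) : ℂ) := by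
      rw [zeta_eq_tsum_one_div_nat_cpow hs, Complex.ofReal_tsum]
      refine tsum_congr fun n => ?_
      rw [hsn, Complex.cpow_natCast]
      push_cast
      ring
    have : zetaE j = (∑' n : ℕ, 1 / (n : ℝ) ^ (2 * j + 2) : ℝ) := by
      unfold zetaE
      rw [show (2 * (j:ℂ) + 2 : ℂ) = s from rfl] at *
      rw [h1, Complex.ofReal_re]
    rw [this, h1]
  have hmu : HasSum (LSeries.term (fun n => (moebius n : ℂ)) s) (riemannZeta s)⁻¹ := by
    have hsum := (LSeriesSummable_moebius_iff.mpr hs).LSeriesHasSum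
    have h1 : (riemannZeta s)⁻¹ = LSeries (fun n => (moebius n : ℂ)) s := by
      refine inv_eq_of_mul_eq_one_right ?_
      rw [← LSeries_zeta_eq_riemannZeta hs]
      exact LSeries_zeta_mul_Lseries_moebius hs
    rw [h1]
    exact hsum
  have hterm : ∀ n : ℕ, LSeries.term (fun n => (moebius n : ℂ)) s n
      = (((moebius n : ℝ) / (n : ℝ) ^ (2 * j + 2) : ℝ) : ℂ) := by
    intro n
    rcases eq_or_ne n 0 with rfl | hn
    · simp
    · rw [LSeries.term_of_ne_zero hn, hsn, Complex.cpow_natCast]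
      push_cast
      ring
  rw [funext hterm, hzeta, ← Complex.ofReal_inv] at hmu
  exact Complex.hasSum_ofReal.mp hmu

open ArithmeticFunction in
lemma bdc_key (k n : ℕ) :
    ∑ j ∈ Finset.range (k + 1), (-1 : ℝ) ^ j * (k.choose j) * ((moebius n : ℝ) / (n : ℝ) ^ (2 * j + 2))
      = (moebius n : ℝ) / (n : ℝ) ^ 2 * (1 - 1 / (n : ℝ) ^ 2) ^ k := by
  rcases eq_or_ne n 0 with rfl | hn
  · simp
  · have hn' : (n : ℝ) ≠ 0 := Nat.cast_ne_zero.mpr hn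
    have hb : (1 - 1 / (n : ℝ) ^ 2) ^ k
        = ∑ j ∈ Finset.range (k + 1),
            (-(1 / (n : ℝ) ^ 2)) ^ j * (1 : ℝ) ^ (k - j) * (k.choose j) := by
      rw [show (1 - 1 / (n : ℝ) ^ 2) = (-(1 / (n : ℝ) ^ 2)) + 1 by ring]
      exact add_pow _ _ _
    rw [hb, Finset.mul_sum]
    refine Finset.sum_congr rfl fun j _ => ?_
    rw [pow_add, pow_mul]
    field_simp
    ring_nf
    rw [mul_assoc (_ * _) ((n : ℝ) ^ (j * 2)), ← mul_pow, mul_inv_cancel₀ hn', one_pow, mul_one]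

open ArithmeticFunction in
theorem bdc_tendsto_zero :
    Filter.Tendsto bdc Filter.atTop (nhds 0) := by
  have hbdc : ∀ k, bdc k
      = ∑' n : ℕ, (moebius n : ℝ) / (n : ℝ) ^ 2 * (1 - 1 / (n : ℝ) ^ 2) ^ k := by
    intro k
    unfold bdc
    have h1 : ∀ j, (-1 : ℝ) ^ j * (k.choose j) / zetaE j
        = ∑' n : ℕ, (-1 : ℝ) ^ j * (k.choose j) * ((moebius n : ℝ) / (n : ℝ) ^ (2 * j + 2)) := by
      intro j
      rw [div_eq_mul_inv, ← (zetaE_inv_hasSum j).tsum_eq, ← tsum_mul_left]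
    calc ∑ j ∈ Finset.range (k + 1), (-1 : ℝ) ^ j * (k.choose j) / zetaE j
        = ∑ j ∈ Finset.range (k + 1), ∑' n : ℕ,
            (-1 : ℝ) ^ j * (k.choose j) * ((moebius n : ℝ) / (n : ℝ) ^ (2 * j + 2)) := by
          exact Finset.sum_congr rfl fun j _ => h1 j
      _ = ∑' n : ℕ, ∑ j ∈ Finset.range (k + 1),
            (-1 : ℝ) ^ j * (k.choose j) * ((moebius n : ℝ) / (n : ℝ) ^ (2 * j + 2)) := by
          exact (Summable.tsum_finsetSum fun j _ => ((zetaE_inv_hasSum j).summable.mul_left _)).symm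
      _ = ∑' n : ℕ, (moebius n : ℝ) / (n : ℝ) ^ 2 * (1 - 1 / (n : ℝ) ^ 2) ^ k := by
          exact tsum_congr fun n => bdc_key k n
  have hsum : Summable (fun n : ℕ => 1 / (n : ℝ) ^ 2) :=
    Real.summable_one_div_nat_pow.mpr one_lt_two
  have hmain : Filter.Tendsto
      (fun k => ∑' n : ℕ, (moebius n : ℝ) / (n : ℝ) ^ 2 * (1 - 1 / (n : ℝ) ^ 2) ^ k)
      Filter.atTop (nhds (∑' n : ℕ, (0 : ℝ))) := by
    refine tendsto_tsum_of_dominated_convergence hsum (fun n => ?_) ?_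
    · rcases eq_or_ne n 0 with rfl | hn
      · simp only [ArithmeticFunction.map_zero, Int.cast_zero, Nat.cast_zero, zero_div, zero_mul]; exact tendsto_const_nhds
      · have hn1 : 1 ≤ n := Nat.one_le_iff_ne_zero.mpr hn
        have hn' : (1 : ℝ) ≤ (n : ℝ) := by exact_mod_cast hn1
        have h0 : 0 < 1 / (n : ℝ) ^ 2 := by positivity
        have h1 : 1 / (n : ℝ) ^ 2 ≤ 1 := by
          rw [div_le_one (by positivity)]
          nlinarith
        have habs : |1 - 1 / (n : ℝ) ^ 2| < 1 := by
          rw [abs_lt]; constructor <;> nlinarith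
        have := (tendsto_pow_atTop_nhds_zero_of_abs_lt_one habs).const_mul
          ((moebius n : ℝ) / (n : ℝ) ^ 2)
        simpa using this
    · filter_upwards with k n
      rcases eq_or_ne n 0 with rfl | hn
      · simp
      · have hn1 : 1 ≤ n := Nat.one_le_iff_ne_zero.mpr hn
        have hn' : (1 : ℝ) ≤ (n : ℝ) := by exact_mod_cast hn1
        have h0 : 0 < 1 / (n : ℝ) ^ 2 := by positivity
        have h1 : 1 / (n : ℝ) ^ 2 ≤ 1 := by
          rw [div_le_one (by positivity)]
          nlinarith
        have hmu : |(moebius n : ℝ)| ≤ 1 := by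
          have := abs_moebius_le_one (n := n)
          exact_mod_cast this
        have hpow : |(1 - 1 / (n : ℝ) ^ 2) ^ k| ≤ 1 := by
          rw [abs_pow]
          refine pow_le_one₀ (abs_nonneg _) ?_
          rw [abs_le]; constructor <;> nlinarith
        calc ‖(moebius n : ℝ) / (n : ℝ) ^ 2 * (1 - 1 / (n : ℝ) ^ 2) ^ k‖
            = |(moebius n : ℝ)| / (n : ℝ) ^ 2 * |(1 - 1 / (n : ℝ) ^ 2) ^ k| := by
              rw [Real.norm_eq_abs, abs_mul, abs_div, abs_pow, abs_of_nonneg (by positivity : (0:ℝ) ≤ (n:ℝ))]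
          _ ≤ 1 / (n : ℝ) ^ 2 * 1 := by
              gcongr
          _ = 1 / (n : ℝ) ^ 2 := by ring
  rw [funext hbdc]
  simpa using hmain
end

section
/- The function Φ(t) = Σ_{n=1}^∞ (2π²n⁴e^{9t} − 3πn²e^{5t})·e^{−πn²e^{4t}} converges absolutely for every real t ≥ 0, and Φ(t) > 0 for all t ≥ 0. -/
open scoped Real

private lemma Phi_term_pos (t : ℝ) (ht : 0 ≤ t) (n : ℕ+) :
    0 < (2 * π ^ 2 * (n : ℝ) ^ 4 * Real.exp (9 * t) - 3 * π * (n : ℝ) ^ 2 * Real.exp (5 * t)) *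
        Real.exp (-π * (n : ℝ) ^ 2 * Real.exp (4 * t)) := by
  have hn : (1:ℝ) ≤ (n : ℝ) := by exact_mod_cast n.one_le
  have hπ : (3:ℝ) < π := Real.pi_gt_three
  have h5 : (1:ℝ) ≤ Real.exp (5 * t) := Real.one_le_exp (by linarith)
  have h59 : Real.exp (5 * t) ≤ Real.exp (9 * t) := Real.exp_le_exp.mpr (by linarith)
  have hn2 : (1:ℝ) ≤ (n : ℝ)^2 := by nlinarith
  have hmono : (n:ℝ)^2 * Real.exp (5*t) ≤ (n:ℝ)^4 * Real.exp (9*t) := by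
    have hn4 : (n:ℝ)^2 ≤ (n:ℝ)^4 := by nlinarith
    exact mul_le_mul hn4 h59 (by positivity) (by positivity)
  have hX : (0:ℝ) < (n:ℝ)^2 * Real.exp (5*t) := by positivity
  have hpos : 0 < 2 * π ^ 2 * (n : ℝ) ^ 4 * Real.exp (9 * t)
      - 3 * π * (n : ℝ) ^ 2 * Real.exp (5 * t) := by
    nlinarith [mul_pos hX (show (0:ℝ) < 2*π-3 by linarith), hπ,
      mul_le_mul_of_nonneg_left hmono (show (0:ℝ) ≤ 2*π^2 by positivity)]
  exact mul_pos hpos (Real.exp_pos _)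

theorem Phi_summable_pos (t : ℝ) (ht : 0 ≤ t) :
    (Summable fun n : ℕ+ =>
      |(2 * π ^ 2 * (n : ℝ) ^ 4 * Real.exp (9 * t) - 3 * π * (n : ℝ) ^ 2 * Real.exp (5 * t)) *
        Real.exp (-π * (n : ℝ) ^ 2 * Real.exp (4 * t))|) ∧
    0 < ∑' n : ℕ+,
      (2 * π ^ 2 * (n : ℝ) ^ 4 * Real.exp (9 * t) - 3 * π * (n : ℝ) ^ 2 * Real.exp (5 * t)) *
        Real.exp (-π * (n : ℝ) ^ 2 * Real.exp (4 * t)) := by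
  have hπ : (3:ℝ) < π := Real.pi_gt_three
  -- summable majorant over ℕ
  have hr : ‖Real.exp (-π)‖ < 1 := by
    rw [Real.norm_eq_abs, abs_of_pos (Real.exp_pos _)]
    exact Real.exp_lt_one_iff.mpr (by linarith)
  have key : Summable fun n : ℕ => (n:ℝ)^4 * Real.exp (-π) ^ n :=
    summable_pow_mul_geometric_of_norm_lt_one 4 hr
  have key2 : Summable fun n : ℕ =>
      2 * π ^ 2 * Real.exp (9*t) * ((n:ℝ)^4 * Real.exp (-π) ^ n) := key.mul_left _
  have key3 : Summable fun n : ℕ+ =>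
      2 * π ^ 2 * Real.exp (9*t) * (((n:ℕ):ℝ)^4 * Real.exp (-π) ^ (n:ℕ)) :=
    key2.comp_injective PNat.coe_injective
  have hbound : ∀ n : ℕ+,
      |(2 * π ^ 2 * (n : ℝ) ^ 4 * Real.exp (9 * t) - 3 * π * (n : ℝ) ^ 2 * Real.exp (5 * t)) *
        Real.exp (-π * (n : ℝ) ^ 2 * Real.exp (4 * t))| ≤
      2 * π ^ 2 * Real.exp (9*t) * (((n:ℕ):ℝ)^4 * Real.exp (-π) ^ (n:ℕ)) := by
    intro n
    have hn : (1:ℝ) ≤ (n : ℝ) := by exact_mod_cast n.one_le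
    have h4 : (1:ℝ) ≤ Real.exp (4 * t) := Real.one_le_exp (by linarith)
    rw [abs_of_pos (Phi_term_pos t ht n)]
    have h1 : (2 * π ^ 2 * (n : ℝ) ^ 4 * Real.exp (9 * t) - 3 * π * (n : ℝ) ^ 2 * Real.exp (5 * t))
        ≤ 2 * π ^ 2 * (n : ℝ) ^ 4 * Real.exp (9 * t) := by
      have : 0 ≤ 3 * π * (n : ℝ) ^ 2 * Real.exp (5 * t) := by positivity
      linarith
    have h2 : Real.exp (-π * (n : ℝ) ^ 2 * Real.exp (4 * t)) ≤ Real.exp (-π) ^ (n:ℕ) := by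
      rw [← Real.exp_nat_mul]
      apply Real.exp_le_exp.mpr
      have hnn : (n:ℝ) ≤ (n:ℝ)^2 := by nlinarith
      nlinarith [mul_le_mul_of_nonneg_left h4 (show (0:ℝ) ≤ π * (n:ℝ)^2 by positivity)]
    calc (2 * π ^ 2 * (n : ℝ) ^ 4 * Real.exp (9 * t) - 3 * π * (n : ℝ) ^ 2 * Real.exp (5 * t)) *
          Real.exp (-π * (n : ℝ) ^ 2 * Real.exp (4 * t))
        ≤ 2 * π ^ 2 * (n : ℝ) ^ 4 * Real.exp (9 * t) * (Real.exp (-π) ^ (n:ℕ)) := by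
          apply mul_le_mul h1 h2 (le_of_lt (Real.exp_pos _)) (by positivity)
      _ = 2 * π ^ 2 * Real.exp (9*t) * (((n:ℕ):ℝ)^4 * Real.exp (-π) ^ (n:ℕ)) := by
          norm_cast; ring
  have hsum : Summable fun n : ℕ+ =>
      |(2 * π ^ 2 * (n : ℝ) ^ 4 * Real.exp (9 * t) - 3 * π * (n : ℝ) ^ 2 * Real.exp (5 * t)) *
        Real.exp (-π * (n : ℝ) ^ 2 * Real.exp (4 * t))| :=
    key3.of_nonneg_of_le (fun n => abs_nonneg _) hbound
  refine ⟨hsum, ?_⟩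
  have hsum' : Summable fun n : ℕ+ =>
      (2 * π ^ 2 * (n : ℝ) ^ 4 * Real.exp (9 * t) - 3 * π * (n : ℝ) ^ 2 * Real.exp (5 * t)) *
        Real.exp (-π * (n : ℝ) ^ 2 * Real.exp (4 * t)) := hsum.of_abs
  exact Summable.tsum_pos hsum' (fun n => (Phi_term_pos t ht n).le) 1 (Phi_term_pos t ht 1)
end

section
/- If a sequence (c_k) of reals satisfies c_k = O(k^{−3/4+ε}) for every ε > 0, and f(x) = Σ_{k=0}^∞ c_k x^k/k! , then e^{−x} f(x) = O(x^{−3/4+ε}) for every ε > 0 as x → ∞ along reals. -/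
open Real Filter Finset

private lemma bs_abs_term (c : ℕ → ℝ) (x : ℝ) (hx : 0 ≤ x) (k : ℕ) :
    |c k * x ^ k / (k.factorial : ℝ)| = |c k| * x ^ k / (k.factorial : ℝ) := by
  rw [abs_div, abs_mul, abs_of_nonneg (pow_nonneg hx k),
    abs_of_nonneg (show (0:ℝ) ≤ (k.factorial : ℝ) from Nat.cast_nonneg _)]

private lemma bs_summable_abs (c : ℕ → ℝ) (M x : ℝ) (hx : 0 ≤ x)
    (hM : ∀ k, |c k| ≤ M) :
    Summable (fun k : ℕ => |c k| * x ^ k / (k.factorial : ℝ)) := by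
  refine Summable.of_nonneg_of_le (fun k => by positivity) (fun k => ?_)
    (((Real.summable_pow_div_factorial x).mul_left M))
  rw [mul_div_assoc]
  exact mul_le_mul_of_nonneg_right (hM k) (by positivity)

private lemma bs_abs_tsum_le (c : ℕ → ℝ) (M x : ℝ) (hx : 0 ≤ x) (hM : ∀ k, |c k| ≤ M) :
    |∑' k : ℕ, c k * x ^ k / (k.factorial : ℝ)| ≤
      ∑' k : ℕ, |c k| * x ^ k / (k.factorial : ℝ) := by
  have h1 : Summable (fun k : ℕ => ‖c k * x ^ k / (k.factorial : ℝ)‖) := by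
    simpa only [Real.norm_eq_abs, bs_abs_term c x hx] using bs_summable_abs c M x hx hM
  have := norm_tsum_le_tsum_norm h1
  simpa only [Real.norm_eq_abs, bs_abs_term c x hx] using this

private lemma bs_exp_tsum (x : ℝ) :
    Real.exp x = ∑' k : ℕ, x ^ k / (k.factorial : ℝ) := by
  rw [Real.exp_eq_exp_ℝ, NormedSpace.exp_eq_tsum_div]

private lemma bs_core (c : ℕ → ℝ) (M C₀ δ : ℝ) (hM0 : 0 ≤ M) (hC0 : 0 ≤ C₀)
    (hM : ∀ k, |c k| ≤ M) (hδ : δ < 0)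
    (hC : ∀ k : ℕ, 1 ≤ k → |c k| ≤ C₀ * (k : ℝ) ^ δ)
    (x : ℝ) (hx1 : 1 ≤ x) :
    ∑' k : ℕ, |c k| * x ^ k / (k.factorial : ℝ) ≤
      M * (2:ℝ) ^ (x/2) * Real.exp (x/2) + C₀ * (x/2) ^ δ * Real.exp x := by
  have hx0 : (0:ℝ) ≤ x := le_trans zero_le_one hx1
  have hx2 : (0:ℝ) < x / 2 := by linarith
  set N : ℕ := ⌈x / 2⌉₊ with hN
  have hN1 : 1 ≤ N := Nat.one_le_iff_ne_zero.mpr (by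
    simp [hN, Nat.ceil_eq_zero, not_le, hx2])
  have hNx : x / 2 ≤ (N : ℝ) := Nat.le_ceil _
  have hN' : (N : ℝ) - 1 ≤ x / 2 := by
    have := Nat.ceil_lt_add_one (le_of_lt hx2)
    simp only [← hN] at this; linarith
  have hsum : Summable (fun k : ℕ => |c k| * x ^ k / (k.factorial : ℝ)) :=
    bs_summable_abs c M x hx0 hM
  rw [← Summable.sum_add_tsum_nat_add N hsum]
  have head : ∑ k ∈ range N, |c k| * x ^ k / (k.factorial : ℝ) ≤
      M * (2:ℝ) ^ (x/2) * Real.exp (x/2) := by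
    have h1 : ∀ k ∈ range N, |c k| * x ^ k / (k.factorial : ℝ) ≤
        M * (2:ℝ) ^ (x/2) * ((x/2) ^ k / (k.factorial : ℝ)) := by
      intro k hk
      have hkN : k ≤ N - 1 := Nat.le_sub_one_of_lt (mem_range.mp hk)
      have h2 : x ^ k ≤ (2:ℝ) ^ (x/2) * (x/2) ^ k := by
        have : x ^ k = (2:ℝ) ^ k * (x/2) ^ k := by
          rw [← mul_pow]; ring_nf
        rw [this]
        refine mul_le_mul_of_nonneg_right ?_ (pow_nonneg (le_of_lt hx2) k)
        calc (2:ℝ) ^ k ≤ (2:ℝ) ^ (N - 1) := pow_le_pow_right₀ one_le_two hkN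
          _ = (2:ℝ) ^ ((N - 1 : ℕ) : ℝ) := (Real.rpow_natCast 2 _).symm
          _ ≤ (2:ℝ) ^ (x/2) := by
              apply Real.rpow_le_rpow_of_exponent_le one_le_two
              rw [Nat.cast_sub hN1]; simpa using hN'
      have hmul : |c k| * x ^ k ≤ M * ((2:ℝ) ^ (x/2) * (x/2) ^ k) :=
        mul_le_mul (hM k) h2 (pow_nonneg hx0 k) hM0
      calc |c k| * x ^ k / (k.factorial : ℝ)
          ≤ M * ((2:ℝ) ^ (x/2) * (x/2) ^ k) / (k.factorial : ℝ) :=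
            div_le_div_of_nonneg_right hmul (by positivity)
        _ = M * (2:ℝ) ^ (x/2) * ((x/2) ^ k / (k.factorial : ℝ)) := by ring
    calc ∑ k ∈ range N, |c k| * x ^ k / (k.factorial : ℝ)
        ≤ ∑ k ∈ range N, M * (2:ℝ) ^ (x/2) * ((x/2) ^ k / (k.factorial : ℝ)) :=
          Finset.sum_le_sum h1
      _ = M * (2:ℝ) ^ (x/2) * ∑ k ∈ range N, ((x/2) ^ k / (k.factorial : ℝ)) := by
          rw [Finset.mul_sum]
      _ ≤ M * (2:ℝ) ^ (x/2) * Real.exp (x/2) := by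
          refine mul_le_mul_of_nonneg_left ?_ (by positivity)
          exact Real.sum_le_exp_of_nonneg (le_of_lt hx2) N
  have tail : ∑' k : ℕ, |c (k + N)| * x ^ (k + N) / ((k + N).factorial : ℝ) ≤
      C₀ * (x/2) ^ δ * Real.exp x := by
    have hsub : Summable (fun k : ℕ => x ^ (k + N) / ((k + N).factorial : ℝ)) :=
      (Real.summable_pow_div_factorial x).comp_injective (add_left_injective N)
    have h1 : ∀ k : ℕ, |c (k + N)| * x ^ (k + N) / ((k + N).factorial : ℝ) ≤
        C₀ * (x/2) ^ δ * (x ^ (k + N) / ((k + N).factorial : ℝ)) := by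
      intro k
      have hk1 : 1 ≤ k + N := le_trans hN1 (Nat.le_add_left N k)
      have hxk : x / 2 ≤ ((k + N : ℕ) : ℝ) := by
        refine hNx.trans ?_
        push_cast; linarith [Nat.cast_nonneg (α := ℝ) k]
      have hcb : |c (k + N)| ≤ C₀ * (x/2) ^ δ := by
        refine (hC (k + N) hk1).trans ?_
        exact mul_le_mul_of_nonneg_left
          (Real.rpow_le_rpow_of_nonpos hx2 hxk (le_of_lt hδ)) hC0
      calc |c (k + N)| * x ^ (k + N) / ((k + N).factorial : ℝ)
          ≤ C₀ * (x/2) ^ δ * x ^ (k + N) / ((k + N).factorial : ℝ) :=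
            div_le_div_of_nonneg_right
              (mul_le_mul_of_nonneg_right hcb (pow_nonneg hx0 _)) (by positivity)
        _ = C₀ * (x/2) ^ δ * (x ^ (k + N) / ((k + N).factorial : ℝ)) := by ring
    calc ∑' k : ℕ, |c (k + N)| * x ^ (k + N) / ((k + N).factorial : ℝ)
        ≤ ∑' k : ℕ, C₀ * (x/2) ^ δ * (x ^ (k + N) / ((k + N).factorial : ℝ)) := by
          refine Summable.tsum_le_tsum h1 ?_ (hsub.mul_left _)
          exact hsum.comp_injective (add_left_injective N)
      _ = C₀ * (x/2) ^ δ * ∑' k : ℕ, (x ^ (k + N) / ((k + N).factorial : ℝ)) := by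
          rw [tsum_mul_left]
      _ ≤ C₀ * (x/2) ^ δ * Real.exp x := by
          refine mul_le_mul_of_nonneg_left ?_ (by positivity)
          have := Summable.sum_add_tsum_nat_add (f := fun k : ℕ => x ^ k / (k.factorial : ℝ)) N
            (Real.summable_pow_div_factorial x)
          have hhead : (0:ℝ) ≤ ∑ k ∈ range N, x ^ k / (k.factorial : ℝ) := by positivity
          rw [bs_exp_tsum, ← this]; linarith
  linarith

private lemma bs_neg (c : ℕ → ℝ) (M C₀ δ : ℝ) (hM0 : 0 ≤ M) (hC0 : 0 ≤ C₀)
    (hM : ∀ k, |c k| ≤ M) (hδ : δ < 0)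
    (hC : ∀ k : ℕ, 1 ≤ k → |c k| ≤ C₀ * (k : ℝ) ^ δ) :
    ∃ C X : ℝ, ∀ x : ℝ, X ≤ x →
      |Real.exp (-x) * ∑' k : ℕ, c k * x ^ k / (k.factorial : ℝ)| ≤ C * x ^ δ := by
  set a : ℝ := (1 - Real.log 2) / 2 with ha_def
  have ha : 0 < a := by
    have := Real.log_two_lt_d9
    rw [ha_def]; norm_num; linarith
  have ev : ∀ᶠ x : ℝ in atTop, x ^ (-δ) * Real.exp (-a * x) ≤ 1 := by
    have := tendsto_rpow_mul_exp_neg_mul_atTop_nhds_zero (-δ) a ha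
    exact this.eventually (eventually_le_nhds one_pos)
  obtain ⟨X₀, hX₀⟩ := eventually_atTop.mp ev
  refine ⟨M + C₀ * (2:ℝ) ^ (-δ), max X₀ 1, fun x hx => ?_⟩
  have hx1 : (1:ℝ) ≤ x := le_trans (le_max_right _ _) hx
  have hxX : X₀ ≤ x := le_trans (le_max_left _ _) hx
  have hx0 : (0:ℝ) < x := lt_of_lt_of_le one_pos hx1
  have key : Real.exp (-a * x) ≤ x ^ δ := by
    have h1 := hX₀ x hxX
    have h2 : x ^ δ * x ^ (-δ) = 1 := by
      rw [← Real.rpow_add hx0]; simp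
    calc Real.exp (-a * x) = x ^ δ * (x ^ (-δ) * Real.exp (-a * x)) := by
          rw [← mul_assoc, h2, one_mul]
      _ ≤ x ^ δ * 1 := mul_le_mul_of_nonneg_left h1 (Real.rpow_nonneg hx0.le δ)
      _ = x ^ δ := mul_one _
  have core := bs_core c M C₀ δ hM0 hC0 hM hδ hC x hx1
  have habs := bs_abs_tsum_le c M x hx0.le hM
  have step : |Real.exp (-x) * ∑' k : ℕ, c k * x ^ k / (k.factorial : ℝ)| ≤
      Real.exp (-x) * (M * (2:ℝ) ^ (x/2) * Real.exp (x/2) + C₀ * (x/2) ^ δ * Real.exp x) := by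
    rw [abs_mul, abs_of_nonneg (Real.exp_nonneg _)]
    exact mul_le_mul_of_nonneg_left (habs.trans core) (Real.exp_nonneg _)
  refine step.trans ?_
  have e1 : Real.exp (-x) * (M * (2:ℝ) ^ (x/2) * Real.exp (x/2)) =
      M * Real.exp (-a * x) := by
    rw [Real.rpow_def_of_pos two_pos]
    rw [show (-a * x : ℝ) = -x + (Real.log 2 * (x/2) + x/2) by rw [ha_def]; ring]
    rw [Real.exp_add, Real.exp_add]; ring
  have hxx : Real.exp (-x) * Real.exp x = 1 := by rw [← Real.exp_add]; simp
  have hpow : ((x/2:ℝ)) ^ δ = (2:ℝ) ^ (-δ) * x ^ δ := by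
    rw [Real.div_rpow hx0.le (by norm_num), Real.rpow_neg (by norm_num : (0:ℝ) ≤ 2),
      div_eq_mul_inv, mul_comm]
  have e2 : Real.exp (-x) * (C₀ * (x/2) ^ δ * Real.exp x) = C₀ * (2:ℝ) ^ (-δ) * x ^ δ := by
    calc Real.exp (-x) * (C₀ * (x/2) ^ δ * Real.exp x)
        = C₀ * (x/2) ^ δ * (Real.exp (-x) * Real.exp x) := by ring
      _ = C₀ * (x/2) ^ δ := by rw [hxx, mul_one]
      _ = C₀ * (2:ℝ) ^ (-δ) * x ^ δ := by rw [hpow]; ring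
  rw [mul_add, e1, e2, add_mul]
  have : M * Real.exp (-a * x) ≤ M * x ^ δ := mul_le_mul_of_nonneg_left key hM0
  linarith

theorem borel_summation_direction (c : ℕ → ℝ)
    (hc : ∀ ε : ℝ, 0 < ε → ∃ C : ℝ, ∀ k : ℕ, 1 ≤ k → |c k| ≤ C * (k : ℝ) ^ (-3/4 + ε)) :
    ∀ ε : ℝ, 0 < ε → ∃ C X : ℝ, ∀ x : ℝ, X ≤ x →
      |Real.exp (-x) * ∑' k : ℕ, c k * x ^ k / (k.factorial : ℝ)| ≤ C * x ^ (-3/4 + ε) := by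
  intro ε hε
  by_cases hε' : ε < 3/4
  · -- negative exponent case
    obtain ⟨C₀, hC₀⟩ := hc ε hε
    have hδ : (-3/4 + ε : ℝ) < 0 := by linarith
    have hC0 : 0 ≤ C₀ := by
      have := hC₀ 1 le_rfl
      simp only [Nat.cast_one, Real.one_rpow, mul_one] at this
      exact le_trans (abs_nonneg _) this
    set M : ℝ := max C₀ |c 0| with hMdef
    have hM0 : 0 ≤ M := le_trans (abs_nonneg _) (le_max_right _ _)
    have hM : ∀ k, |c k| ≤ M := by
      intro k
      cases k with
      | zero => exact le_max_right _ _
      | succ n =>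
        have h1 : (1:ℝ) ≤ ((n+1 : ℕ) : ℝ) := by exact_mod_cast Nat.succ_le_succ n.zero_le
        have h2 : ((n+1 : ℕ) : ℝ) ^ (-3/4 + ε : ℝ) ≤ 1 :=
          Real.rpow_le_one_of_one_le_of_nonpos h1 (le_of_lt hδ)
        have h3 : C₀ * ((n+1 : ℕ) : ℝ) ^ (-3/4 + ε : ℝ) ≤ C₀ * 1 :=
          mul_le_mul_of_nonneg_left h2 hC0
        rw [mul_one] at h3
        exact le_trans (hC₀ (n+1) (Nat.succ_le_succ n.zero_le)) (h3.trans (le_max_left _ _))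
    exact bs_neg c M C₀ _ hM0 hC0 hM hδ hC₀
  · -- nonnegative exponent case
    obtain ⟨C₁, hC₁⟩ := hc (3/4) (by norm_num)
    have hδ0 : (0:ℝ) ≤ -3/4 + ε := by linarith
    have hb : ∀ k : ℕ, 1 ≤ k → |c k| ≤ C₁ := by
      intro k hk
      have := hC₁ k hk
      norm_num at this
      exact this
    set M : ℝ := max C₁ |c 0| with hMdef
    have hM0 : 0 ≤ M := le_trans (abs_nonneg _) (le_max_right _ _)
    have hM : ∀ k, |c k| ≤ M := by
      intro k
      cases k with
      | zero => exact le_max_right _ _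
      | succ n => exact le_trans (hb (n+1) (Nat.succ_le_succ n.zero_le)) (le_max_left _ _)
    refine ⟨M, 1, fun x hx1 => ?_⟩
    have hx0 : (0:ℝ) < x := lt_of_lt_of_le one_pos hx1
    have habs := bs_abs_tsum_le c M x hx0.le hM
    have hbound : ∑' k : ℕ, |c k| * x ^ k / (k.factorial : ℝ) ≤ M * Real.exp x := by
      have h1 : ∀ k : ℕ, |c k| * x ^ k / (k.factorial : ℝ) ≤
          M * (x ^ k / (k.factorial : ℝ)) := by
        intro k
        rw [mul_div_assoc]
        exact mul_le_mul_of_nonneg_right (hM k) (by positivity)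
      calc ∑' k : ℕ, |c k| * x ^ k / (k.factorial : ℝ)
          ≤ ∑' k : ℕ, M * (x ^ k / (k.factorial : ℝ)) :=
            Summable.tsum_le_tsum h1 (bs_summable_abs c M x hx0.le hM)
              ((Real.summable_pow_div_factorial x).mul_left M)
        _ = M * ∑' k : ℕ, (x ^ k / (k.factorial : ℝ)) := tsum_mul_left
        _ = M * Real.exp x := by rw [← bs_exp_tsum]
    calc |Real.exp (-x) * ∑' k : ℕ, c k * x ^ k / (k.factorial : ℝ)|
        = Real.exp (-x) * |∑' k : ℕ, c k * x ^ k / (k.factorial : ℝ)| := by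
          rw [abs_mul, abs_of_nonneg (Real.exp_nonneg _)]
      _ ≤ Real.exp (-x) * (M * Real.exp x) :=
          mul_le_mul_of_nonneg_left (habs.trans hbound) (Real.exp_nonneg _)
      _ = M := by rw [mul_comm M, ← mul_assoc, ← Real.exp_add]; simp
      _ ≤ M * x ^ (-3/4 + ε : ℝ) := by
          nth_rewrite 1 [← mul_one M]
          exact mul_le_mul_of_nonneg_left
            (Real.one_le_rpow hx1 hδ0) hM0
end
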